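/- For the hard-core model on the 2K×3L triangular grid Λ, the set of stable configurations (global minimizers of the energy H on the set X of hard-core configurations) is exactly {a, b, c}: H(a) = H(b) = H(c) = −2KL, and every hard-core configuration σ ∈ X with σ ∉ {a, b, c} satisfies H(σ) > −2KL. -/

import Mathlib

open Finset

variable (K L : ℕ) [NeZero K] [NeZero L]

/-- Vertices of the `2K × 3L` triangular grid: pairs `(i,j) ∈ (ℤ/2K) × (ℤ/6L)` with `i+j` even. -/
abbrev Vert (K L : ℕ) [NeZero K] [NeZero L] : Type :=
  {p : ZMod (2 * K) × ZMod (6 * L) // (p.1.val + p.2.val) % 2 = 0}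

/-- Adjacency in the triangular grid with periodic boundary conditions. -/
abbrev Adj (v w : Vert K L) : Prop :=
  (w.1.1 = v.1.1 ∧ (w.1.2 = v.1.2 + 2 ∨ w.1.2 = v.1.2 - 2)) ∨
  ((w.1.1 = v.1.1 + 1 ∨ w.1.1 = v.1.1 - 1) ∧ (w.1.2 = v.1.2 + 1 ∨ w.1.2 = v.1.2 - 1))

/-- A particle configuration on the grid. -/
abbrev Cfg (K L : ℕ) [NeZero K] [NeZero L] : Type := Vert K L → Bool

/-- Hard-core condition: no two adjacent occupied sites. -/
abbrev HardCore (σ : Cfg K L) : Prop :=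
  ∀ v w : Vert K L, Adj K L v w → ¬(σ v = true ∧ σ w = true)

/-- Number of particles of a configuration. -/
def nParticles (σ : Cfg K L) : ℕ := (univ.filter fun v => σ v = true).card

/-- The energy (Hamiltonian) `H(σ) = -Σ_v σ(v)`. -/
def energy (σ : Cfg K L) : ℤ := -(nParticles K L σ : ℤ)

/-- The configuration `a`: indicator of `Λ_a` (columns `j ≡ 0 (mod 3)`). -/
def confA : Cfg K L := fun v => decide (v.1.2.val % 3 = 0)

/-- The configuration `b`: indicator of `Λ_b` (columns `j ≡ 1 (mod 3)`). -/
def confB : Cfg K L := fun v => decide (v.1.2.val % 3 = 1)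

/-- The configuration `c`: indicator of `Λ_c` (columns `j ≡ 2 (mod 3)`). -/
def confC : Cfg K L := fun v => decide (v.1.2.val % 3 = 2)

/-- A path in the energy landscape: a finite sequence of hard-core configurations,
consecutive ones differing in at most one vertex. -/
structure HCPath (σ σ' : Cfg K L) where
  n : ℕ
  ω : Fin (n + 1) → Cfg K L
  first : ω 0 = σ
  last : ω (Fin.last n) = σ'
  hc : ∀ i, HardCore K L (ω i)
  step : ∀ i : Fin n,
    ((univ : Finset (Vert K L)).filter fun v => ω i.castSucc v ≠ ω i.succ v).card ≤ 1

/-- Height of a path: maximal energy along it. -/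
noncomputable def pathHeight {σ σ' : Cfg K L} (p : HCPath K L σ σ') : ℤ :=
  Finset.univ.sup' Finset.univ_nonempty fun i => energy K L (p.ω i)

/-- Communication height `Φ(σ,σ')`: minimal height over all paths from `σ` to `σ'`. -/
noncomputable def commHeight (σ σ' : Cfg K L) : ℤ :=
  sInf {h : ℤ | ∃ p : HCPath K L σ σ', pathHeight K L p = h}

/-- The horizontal stripe `S_i = r_{2i} ∪ r_{2i+1}`. -/
abbrev inHStripe (i : ℕ) (v : Vert K L) : Prop :=
  v.1.1 = ((2 * i : ℕ) : ZMod (2 * K)) ∨ v.1.1 = ((2 * i + 1 : ℕ) : ZMod (2 * K))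

/-- The vertical stripe `C_j = c_j ∪ c_{j+1} ∪ c_{j+2}` (column indices mod `6L`). -/
abbrev inVStripe (j : ℕ) (v : Vert K L) : Prop :=
  v.1.2 = ((j : ℕ) : ZMod (6 * L)) ∨ v.1.2 = ((j + 1 : ℕ) : ZMod (6 * L)) ∨
    v.1.2 = ((j + 2 : ℕ) : ZMod (6 * L))

/-- Two configurations agree on a region. -/
def agreesOn (P : Vert K L → Prop) (σ τ : Cfg K L) : Prop := ∀ v, P v → σ v = τ v

def ψ : ZMod (2*K) →+* ZMod 2 := ZMod.castHom (Dvd.intro K rfl) (ZMod 2)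
def χ : ZMod (6*L) →+* ZMod 2 := ZMod.castHom (show (2:ℕ) ∣ 6*L from ⟨3*L, by ring⟩) (ZMod 2)
def φ3 : ZMod (6*L) →+* ZMod 3 := ZMod.castHom (show (3:ℕ) ∣ 6*L from ⟨2*L, by ring⟩) (ZMod 3)

lemma psi_val (x : ZMod (2*K)) : (ψ K x).val = x.val % 2 := by
  rw [ψ, ZMod.castHom_apply, ← ZMod.natCast_val, ZMod.val_natCast]

lemma chi_val (x : ZMod (6*L)) : (χ L x).val = x.val % 2 := by
  rw [χ, ZMod.castHom_apply, ← ZMod.natCast_val, ZMod.val_natCast]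

lemma phi3_val (x : ZMod (6*L)) : (φ3 L x).val = x.val % 3 := by
  rw [φ3, ZMod.castHom_apply, ← ZMod.natCast_val, ZMod.val_natCast]

lemma parity_iff (x : ZMod (2*K)) (y : ZMod (6*L)) :
    (x.val + y.val) % 2 = 0 ↔ ψ K x + χ L y = 0 := by
  rw [← ZMod.val_eq_zero, ZMod.val_add, psi_val, chi_val, Nat.add_mod]

/-- Shift a vertex by `(a, b)` with `a + b` even. -/
def shf (v : Vert K L) (a b : ℤ) (h : (a + b) % 2 = 0) : Vert K L :=
  ⟨(v.1.1 + a, v.1.2 + b), by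
    have hv := (parity_iff K L v.1.1 v.1.2).mp v.2
    rw [parity_iff]
    simp only [map_add, map_intCast]
    rw [show (ψ K v.1.1 + (a:ZMod 2)) + (χ L v.1.2 + (b:ZMod 2))
        = (ψ K v.1.1 + χ L v.1.2) + ((a + b : ℤ) : ZMod 2) by push_cast; ring, hv]
    rw [zero_add, ZMod.intCast_zmod_eq_zero_iff_dvd]
    omega⟩

lemma shf_fst (v : Vert K L) (a b : ℤ) (h) : (shf K L v a b h).1.1 = v.1.1 + a := rfl
lemma shf_snd (v : Vert K L) (a b : ℤ) (h) : (shf K L v a b h).1.2 = v.1.2 + b := rfl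

lemma shf_shf (v : Vert K L) (a b c d : ℤ) (h h' h'') :
    shf K L (shf K L v a b h) c d h' = shf K L v (a+c) (b+d) h'' := by
  apply Subtype.ext
  simp only [shf]
  refine Prod.ext ?_ ?_ <;> simp <;> push_cast <;> ring

lemma shf_zero (v : Vert K L) (h) : shf K L v 0 0 h = v := by
  apply Subtype.ext
  simp [shf]

lemma adj_shf (v : Vert K L) (a b : ℤ) (h) (hab : (a,b) = (0,2) ∨ (a,b) = (0,-2) ∨ (a,b) = (1,1)
    ∨ (a,b) = (1,-1) ∨ (a,b) = (-1,1) ∨ (a,b) = (-1,-1)) : Adj K L v (shf K L v a b h) := by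
  rcases hab with h1|h1|h1|h1|h1|h1 <;>
    (injection h1 with h1 h2; subst h1; subst h2) <;>
    simp [Adj, shf, sub_eq_add_neg] <;> push_cast <;> ring_nf <;> simp

lemma val_injective3 : Function.Injective (ZMod.val : ZMod 3 → ℕ) := by decide

lemma adj_res_ne (v w : Vert K L) (h : Adj K L v w) :
    v.1.2.val % 3 ≠ w.1.2.val % 3 := by
  intro heq
  have hphi : φ3 L v.1.2 = φ3 L w.1.2 := by
    apply val_injective3; rw [phi3_val, phi3_val]; exact heq
  have key : ∀ c : ZMod 3, c ≠ 0 → φ3 L v.1.2 ≠ φ3 L v.1.2 + c := by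
    intro c hc habs
    exact hc (left_eq_add.mp habs)
  rcases h with ⟨_, h | h⟩ | ⟨_, h | h⟩ <;> rw [h] at hphi
  · rw [map_add, map_ofNat] at hphi; exact key 2 (by decide) hphi
  · rw [sub_eq_add_neg, map_add, map_neg, map_ofNat] at hphi; exact key (-2) (by decide) hphi
  · rw [map_add, map_one] at hphi; exact key 1 (by decide) hphi
  · rw [sub_eq_add_neg, map_add, map_neg, map_one] at hphi; exact key (-1) (by decide) hphi

lemma hc_res (r : ℕ) : HardCore K L (fun v => decide (v.1.2.val % 3 = r)) := by
  intro v w hadj ⟨hv, hw⟩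
  simp only [decide_eq_true_eq] at hv hw
  exact adj_res_ne K L v w hadj (hv.trans hw.symm)

lemma shf_eq (v : Vert K L) (a b a' b' : ℤ) (h h') (ha : a = a') (hb : b = b') :
    shf K L v a b h = shf K L v a' b' h' := by subst ha; subst hb; rfl

/-- Shift as an equivalence. -/
def shfE (a b : ℤ) (h : (a + b) % 2 = 0) : Vert K L ≃ Vert K L where
  toFun v := shf K L v a b h
  invFun v := shf K L v (-a) (-b) (by omega)
  left_inv v := by
    dsimp only
    rw [shf_shf K L v a b (-a) (-b) h (by omega) (by omega)]
    rw [shf_eq K L v _ _ 0 0 _ (by norm_num) (by ring) (by ring), shf_zero]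
  right_inv v := by
    dsimp only
    rw [shf_shf K L v (-a) (-b) a b (by omega) h (by omega)]
    rw [shf_eq K L v _ _ 0 0 _ (by norm_num) (by ring) (by ring), shf_zero]

lemma sum_shf (f : Vert K L → ℕ) (a b : ℤ) (h : (a + b) % 2 = 0) :
    ∑ v : Vert K L, f (shf K L v a b h) = ∑ v : Vert K L, f v :=
  Equiv.sum_comp (shfE K L a b h) f

lemma card_vert : Fintype.card (Vert K L) = 6 * K * L := by
  have h1 : (univ.filter fun p : ZMod (2*K) × ZMod (6*L) => (p.1.val + p.2.val) % 2 = 0).card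
      = (univ.filter fun p : ZMod (2*K) × ZMod (6*L) => ¬ (p.1.val + p.2.val) % 2 = 0).card := by
    apply Finset.card_nbij' (fun p => (p.1 + 1, p.2)) (fun p => (p.1 - 1, p.2))
    · intro p hp
      simp only [mem_coe, mem_filter, mem_univ, true_and] at hp ⊢
      rw [parity_iff] at hp
      rw [parity_iff]
      simp only [map_add, map_one]
      intro habs
      have : ψ K p.1 + χ L p.2 + 1 = 0 := by linear_combination habs
      rw [hp] at this
      simp at this
    · intro p hp
      simp only [mem_coe, mem_filter, mem_univ, true_and] at hp ⊢
      rw [parity_iff] at hp ⊢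
      simp only [map_sub, map_one]
      have h2 : ∀ y : ZMod 2, y ≠ 0 → y = 1 := by decide
      have := h2 _ hp
      linear_combination this
    · intro p _; simp
    · intro p _; simp
  have h2 := Finset.card_filter_add_card_filter_not
    (s := (univ : Finset (ZMod (2*K) × ZMod (6*L))))
    (fun p => (p.1.val + p.2.val) % 2 = 0)
  rw [← h1, card_univ, Fintype.card_prod, ZMod.card, ZMod.card] at h2
  rw [Fintype.card_subtype]
  have e1 : 2*K*(6*L) = 2*(6*K*L) := by ring
  omega

lemma shift_res (v : Vert K L) (h) :
    (shf K L v 1 1 h).1.2.val % 3 = (v.1.2.val % 3 + 1) % 3 := by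
  have : (shf K L v 1 1 h).1.2 = v.1.2 + 1 := by rw [shf_snd]; push_cast; ring
  rw [← phi3_val, this, map_add, map_one, ZMod.val_add, phi3_val]
  norm_num [ZMod.val_one]

lemma shift_res' (v : Vert K L) (h) :
    (shf K L v (-1) (-1) h).1.2.val % 3 = (v.1.2.val % 3 + 2) % 3 := by
  have hv : shf K L (shf K L v (-1) (-1) h) 1 1 (by norm_num) = v := by
    rw [shf_shf K L v (-1) (-1) 1 1 h (by norm_num) (by norm_num)]
    rw [shf_eq K L v _ _ 0 0 _ (by norm_num) (by ring) (by ring), shf_zero]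
  have h1 := shift_res K L (shf K L v (-1) (-1) h) (by norm_num)
  rw [hv] at h1
  have h2 : v.1.2.val % 3 < 3 := Nat.mod_lt _ (by norm_num)
  have h3 : (shf K L v (-1) (-1) h).1.2.val % 3 < 3 := Nat.mod_lt _ (by norm_num)
  omega

def classC (r : ℕ) : Finset (Vert K L) := univ.filter (fun v => v.1.2.val % 3 = r)

lemma card_class_step (r : ℕ) (hr : r < 3) :
    (classC K L r).card = (classC K L ((r+1) % 3)).card := by
  apply Finset.card_nbij' (fun v => shf K L v 1 1 (by norm_num))
    (fun v => shf K L v (-1) (-1) (by norm_num))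
  · intro v hv
    simp only [classC, mem_coe, mem_filter, mem_univ, true_and] at hv ⊢
    rw [shift_res, hv]
  · intro v hv
    simp only [classC, mem_coe, mem_filter, mem_univ, true_and] at hv ⊢
    rw [shift_res', hv]
    omega
  · intro v _
    dsimp only
    rw [shf_shf K L v 1 1 (-1) (-1) _ _ (by norm_num)]
    rw [shf_eq K L v _ _ 0 0 _ (by norm_num) (by ring) (by ring), shf_zero]
  · intro v _
    dsimp only
    rw [shf_shf K L v (-1) (-1) 1 1 _ _ (by norm_num)]
    rw [shf_eq K L v _ _ 0 0 _ (by norm_num) (by ring) (by ring), shf_zero]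

lemma card_class (r : ℕ) (hr : r < 3) : (classC K L r).card = 2 * K * L := by
  have h01 := card_class_step K L 0 (by norm_num)
  have h12 := card_class_step K L 1 (by norm_num)
  have h20 := card_class_step K L 2 (by norm_num)
  norm_num at h01 h12 h20
  have hsum : (classC K L 0).card + (classC K L 1).card + (classC K L 2).card = 6 * K * L := by
    rw [← card_vert K L, ← Finset.card_univ]
    simp only [classC, Finset.card_filter, ← Finset.sum_add_distrib, Finset.card_eq_sum_ones (univ : Finset (Vert K L))]
    apply Finset.sum_congr rfl
    intro v _
    have h3 : v.1.2.val % 3 < 3 := Nat.mod_lt _ (by norm_num)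
    split_ifs <;> omega
  have e : 6 * K * L = 2*K*L + 2*K*L + 2*K*L := by ring
  interval_cases r <;> omega

lemma toNat_eq (b : Bool) : b.toNat = if b = true then 1 else 0 := by cases b <;> rfl

def upSum (σ : Cfg K L) (v : Vert K L) : ℕ :=
  (σ v).toNat + (σ (shf K L v 0 2 (by norm_num))).toNat + (σ (shf K L v 1 1 (by norm_num))).toNat

def dnSum (σ : Cfg K L) (v : Vert K L) : ℕ :=
  (σ v).toNat + (σ (shf K L v 0 2 (by norm_num))).toNat + (σ (shf K L v (-1) 1 (by norm_num))).toNat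

lemma bool_triple (a b c : Bool) (h1 : ¬(a = true ∧ b = true)) (h2 : ¬(a = true ∧ c = true))
    (h3 : ¬(b = true ∧ c = true)) : a.toNat + b.toNat + c.toNat ≤ 1 := by
  cases a <;> cases b <;> cases c <;> simp_all

lemma triangle_le (σ : Cfg K L) (hσ : HardCore K L σ) (v w u : Vert K L)
    (hvw : Adj K L v w) (hvu : Adj K L v u) (hwu : Adj K L w u) :
    (σ v).toNat + (σ w).toNat + (σ u).toNat ≤ 1 := by
  exact bool_triple _ _ _ (hσ v w hvw) (hσ v u hvu) (hσ w u hwu)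

lemma upSum_le (σ : Cfg K L) (hσ : HardCore K L σ) (v : Vert K L) : upSum K L σ v ≤ 1 := by
  apply triangle_le K L σ hσ
  · exact adj_shf K L v 0 2 _ (by norm_num)
  · exact adj_shf K L v 1 1 _ (by norm_num)
  · have e : shf K L (shf K L v 0 2 (by norm_num)) 1 (-1) (by norm_num)
        = shf K L v 1 1 (by norm_num) := by
      rw [shf_shf K L v 0 2 1 (-1) _ _ (by norm_num)]
      exact shf_eq K L v _ _ _ _ _ _ (by ring) (by ring)
    rw [← e]
    exact adj_shf K L _ 1 (-1) _ (by norm_num)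

lemma dnSum_le (σ : Cfg K L) (hσ : HardCore K L σ) (v : Vert K L) : dnSum K L σ v ≤ 1 := by
  apply triangle_le K L σ hσ
  · exact adj_shf K L v 0 2 _ (by norm_num)
  · exact adj_shf K L v (-1) 1 _ (by norm_num)
  · have e : shf K L (shf K L v 0 2 (by norm_num)) (-1) (-1) (by norm_num)
        = shf K L v (-1) 1 (by norm_num) := by
      rw [shf_shf K L v 0 2 (-1) (-1) _ _ (by norm_num)]
      exact shf_eq K L v _ _ _ _ _ _ (by ring) (by ring)
    rw [← e]
    exact adj_shf K L _ (-1) (-1) _ (by norm_num)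

lemma sum_toNat (σ : Cfg K L) : ∑ v : Vert K L, (σ v).toNat = nParticles K L σ := by
  rw [nParticles, Finset.card_filter]
  exact Finset.sum_congr rfl fun v _ => toNat_eq (σ v)

lemma sum_upSum (σ : Cfg K L) : ∑ v : Vert K L, upSum K L σ v = 3 * nParticles K L σ := by
  simp only [upSum, Finset.sum_add_distrib]
  rw [sum_shf K L (fun v => (σ v).toNat) 0 2, sum_shf K L (fun v => (σ v).toNat) 1 1,
    sum_toNat]
  ring

lemma sum_dnSum (σ : Cfg K L) : ∑ v : Vert K L, dnSum K L σ v = 3 * nParticles K L σ := by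
  simp only [dnSum, Finset.sum_add_distrib]
  rw [sum_shf K L (fun v => (σ v).toNat) 0 2, sum_shf K L (fun v => (σ v).toNat) (-1) 1,
    sum_toNat]
  ring

lemma nP_le (σ : Cfg K L) (hσ : HardCore K L σ) : nParticles K L σ ≤ 2 * K * L := by
  have h1 : ∑ v : Vert K L, upSum K L σ v ≤ ∑ _v : Vert K L, 1 :=
    Finset.sum_le_sum fun v _ => upSum_le K L σ hσ v
  rw [sum_upSum, Finset.sum_const, smul_eq_mul, mul_one, card_univ, card_vert] at h1
  have h2 : 6 * K * L = 3 * (2 * K * L) := by ring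
  rw [h2] at h1
  exact Nat.le_of_mul_le_mul_left h1 (by norm_num)

lemma all_one (f : Vert K L → ℕ) (hle : ∀ v, f v ≤ 1)
    (hsum : ∑ v : Vert K L, f v = Fintype.card (Vert K L)) (v : Vert K L) : f v = 1 := by
  by_contra h
  have hlt : ∑ v : Vert K L, f v < ∑ _v : Vert K L, 1 := by
    apply Finset.sum_lt_sum (fun i _ => hle i)
    exact ⟨v, Finset.mem_univ v, by have := hle v; omega⟩
  rw [hsum, Finset.sum_const, smul_eq_mul, mul_one, card_univ] at hlt
  omega

lemma bool_first (a b c : Bool) (h : a.toNat + b.toNat + c.toNat = 1)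
    (hb : b = false) (hc : c = false) : a = true := by
  subst hb; subst hc; cases a <;> simp_all

lemma bool_second (a b c : Bool) (h : a.toNat + b.toNat + c.toNat = 1)
    (ha : a = false) (hc : c = false) : b = true := by
  subst ha; subst hc; cases b <;> simp_all

lemma not_occ (σ : Cfg K L) (hσ : HardCore K L σ) (v w : Vert K L)
    (hadj : Adj K L v w) (hv : σ v = true) : σ w = false := by
  cases h : σ w
  · rfl
  · exact absurd ⟨hv, h⟩ (hσ v w hadj)

variable {σ : Cfg K L}

lemma prop1 (hσ : HardCore K L σ)
    (hup : ∀ v, upSum K L σ v = 1) (hdn : ∀ v, dnSum K L σ v = 1) (v : Vert K L) (hv : σ v = true) (h) : σ (shf K L v (-1) 3 h) = true := by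
  set u := shf K L v (-1) 1 (by norm_num) with hu
  have h1 : σ u = false := not_occ K L σ hσ v u (adj_shf K L v (-1) 1 _ (by norm_num)) hv
  have e3 : shf K L u 1 1 (by norm_num) = shf K L v 0 2 (by norm_num) := by
    rw [hu, shf_shf K L v (-1) 1 1 1 _ _ (by norm_num)]
    exact shf_eq K L v _ _ _ _ _ _ (by ring) (by ring)
  have h3 : σ (shf K L u 1 1 (by norm_num)) = false := by
    rw [e3]; exact not_occ K L σ hσ v _ (adj_shf K L v 0 2 _ (by norm_num)) hv
  have e2 : shf K L u 0 2 (by norm_num) = shf K L v (-1) 3 h := by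
    rw [hu, shf_shf K L v (-1) 1 0 2 _ _ (by norm_num)]
    exact shf_eq K L v _ _ _ _ _ _ (by ring) (by ring)
  have key := hup u
  unfold upSum at key
  rw [← e2]
  exact bool_second _ _ _ key h1 h3

lemma prop2 (hσ : HardCore K L σ)
    (hup : ∀ v, upSum K L σ v = 1) (hdn : ∀ v, dnSum K L σ v = 1) (v : Vert K L) (hv : σ v = true) (h) : σ (shf K L v 1 3 h) = true := by
  set u := shf K L v 1 1 (by norm_num) with hu
  have h1 : σ u = false := not_occ K L σ hσ v u (adj_shf K L v 1 1 _ (by norm_num)) hv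
  have e3 : shf K L u (-1) 1 (by norm_num) = shf K L v 0 2 (by norm_num) := by
    rw [hu, shf_shf K L v 1 1 (-1) 1 _ _ (by norm_num)]
    exact shf_eq K L v _ _ _ _ _ _ (by ring) (by ring)
  have h3 : σ (shf K L u (-1) 1 (by norm_num)) = false := by
    rw [e3]; exact not_occ K L σ hσ v _ (adj_shf K L v 0 2 _ (by norm_num)) hv
  have e2 : shf K L u 0 2 (by norm_num) = shf K L v 1 3 h := by
    rw [hu, shf_shf K L v 1 1 0 2 _ _ (by norm_num)]
    exact shf_eq K L v _ _ _ _ _ _ (by ring) (by ring)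
  have key := hdn u
  unfold dnSum at key
  rw [← e2]
  exact bool_second _ _ _ key h1 h3

lemma prop3 (hσ : HardCore K L σ)
    (hup : ∀ v, upSum K L σ v = 1) (hdn : ∀ v, dnSum K L σ v = 1) (v : Vert K L) (hv : σ v = true) (h) : σ (shf K L v (-1) (-3) h) = true := by
  set u := shf K L v (-1) (-3) h with hu
  have e2 : shf K L u 0 2 (by norm_num) = shf K L v (-1) (-1) (by norm_num) := by
    rw [hu, shf_shf K L v (-1) (-3) 0 2 _ _ (by norm_num)]
    exact shf_eq K L v _ _ _ _ _ _ (by ring) (by ring)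
  have h2 : σ (shf K L u 0 2 (by norm_num)) = false := by
    rw [e2]; exact not_occ K L σ hσ v _ (adj_shf K L v (-1) (-1) _ (by norm_num)) hv
  have e3 : shf K L u 1 1 (by norm_num) = shf K L v 0 (-2) (by norm_num) := by
    rw [hu, shf_shf K L v (-1) (-3) 1 1 _ _ (by norm_num)]
    exact shf_eq K L v _ _ _ _ _ _ (by ring) (by ring)
  have h3 : σ (shf K L u 1 1 (by norm_num)) = false := by
    rw [e3]
    have : shf K L v 0 (-2) (by norm_num) = shf K L v 0 (0-2) (by norm_num) := by
      exact shf_eq K L v _ _ _ _ _ _ (by ring) (by ring)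
    rw [this]
    refine not_occ K L σ hσ v _ ?_ hv
    apply adj_shf K L v 0 (0-2) _ (by norm_num)
  have key := hup u
  unfold upSum at key
  exact bool_first _ _ _ key h2 h3

lemma prop4 (hσ : HardCore K L σ)
    (hup : ∀ v, upSum K L σ v = 1) (hdn : ∀ v, dnSum K L σ v = 1) (v : Vert K L) (hv : σ v = true) (h) : σ (shf K L v 1 (-3) h) = true := by
  set u := shf K L v 1 (-3) h with hu
  have e2 : shf K L u 0 2 (by norm_num) = shf K L v 1 (-1) (by norm_num) := by
    rw [hu, shf_shf K L v 1 (-3) 0 2 _ _ (by norm_num)]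
    exact shf_eq K L v _ _ _ _ _ _ (by ring) (by ring)
  have h2 : σ (shf K L u 0 2 (by norm_num)) = false := by
    rw [e2]; exact not_occ K L σ hσ v _ (adj_shf K L v 1 (-1) _ (by norm_num)) hv
  have e3 : shf K L u (-1) 1 (by norm_num) = shf K L v 0 (-2) (by norm_num) := by
    rw [hu, shf_shf K L v 1 (-3) (-1) 1 _ _ (by norm_num)]
    exact shf_eq K L v _ _ _ _ _ _ (by ring) (by ring)
  have h3 : σ (shf K L u (-1) 1 (by norm_num)) = false := by
    rw [e3]
    have : shf K L v 0 (-2) (by norm_num) = shf K L v 0 (0-2) (by norm_num) :=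
      shf_eq K L v _ _ _ _ _ _ (by ring) (by ring)
    rw [this]
    exact not_occ K L σ hσ v _ (adj_shf K L v 0 (0-2) _ (by norm_num)) hv
  have key := hdn u
  unfold dnSum at key
  exact bool_first _ _ _ key h2 h3


lemma reach {σ : Cfg K L} (hσ : HardCore K L σ)
    (hup : ∀ v, upSum K L σ v = 1) (hdn : ∀ v, dnSum K L σ v = 1) :
    ∀ n a t : ℕ, a + t ≤ n → (a + t) % 2 = 0 → ∀ v : Vert K L, σ v = true →
      ∀ h, σ (shf K L v (a : ℤ) (3 * (t : ℤ)) h) = true := by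
  intro n
  induction n with
  | zero =>
    intro a t hle hpar v hv h
    have ha : a = 0 := by omega
    have ht : t = 0 := by omega
    subst ha; subst ht
    rw [shf_eq K L v _ _ 0 0 _ (by norm_num) (by norm_num) (by norm_num),
      shf_zero]
    exact hv
  | succ n ih =>
    intro a t hle hpar v hv h
    by_cases ha2 : 2 ≤ a
    · -- move by (2,0) first
      have s1 : σ (shf K L v 1 3 (by norm_num)) = true := prop2 K L hσ hup hdn v hv _
      have s2 : σ (shf K L (shf K L v 1 3 (by norm_num)) 1 (-3) (by norm_num)) = true :=
        prop4 K L hσ hup hdn _ s1 _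
      rw [shf_shf K L v 1 3 1 (-3) _ _ (by norm_num)] at s2
      have e : shf K L (shf K L v (1+1) (3+-3) (by norm_num)) (((a-2:ℕ)):ℤ) (3*(t:ℤ))
          (by omega) = shf K L v (a:ℤ) (3*(t:ℤ)) h := by
        rw [shf_shf K L _ _ _ _ _ _ _ (by omega)]
        exact shf_eq K L v _ _ _ _ _ _ (by omega) (by omega)
      rw [← e]
      exact ih (a-2) t (by omega) (by omega) _ s2 _
    · by_cases ht2 : 2 ≤ t
      · -- move by (0,6) first
        have s1 : σ (shf K L v 1 3 (by norm_num)) = true := prop2 K L hσ hup hdn v hv _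
        have s2 : σ (shf K L (shf K L v 1 3 (by norm_num)) (-1) 3 (by norm_num)) = true :=
          prop1 K L hσ hup hdn _ s1 _
        rw [shf_shf K L v 1 3 (-1) 3 _ _ (by norm_num)] at s2
        have e : shf K L (shf K L v (1+-1) (3+3) (by norm_num)) ((a:ℤ)) (3*((t-2:ℕ):ℤ))
            (by omega) = shf K L v (a:ℤ) (3*(t:ℤ)) h := by
          rw [shf_shf K L _ _ _ _ _ _ _ (by omega)]
          exact shf_eq K L v _ _ _ _ _ _ (by omega) (by omega)
        rw [← e]
        exact ih a (t-2) (by omega) (by omega) _ s2 _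
      · -- a ≤ 1 and t ≤ 1; parity forces (0,0) or (1,1)
        rcases Nat.lt_or_ge a 1 with ha | ha
        · have ha0 : a = 0 := by omega
          have ht0 : t = 0 := by omega
          subst ha0; subst ht0
          rw [shf_eq K L v _ _ 0 0 _ (by norm_num) (by norm_num) (by norm_num),
            shf_zero]
          exact hv
        · have ha1 : a = 1 := by omega
          have ht1 : t = 1 := by omega
          subst ha1; subst ht1
          rw [shf_eq K L v _ _ 1 3 _ (by norm_num) (by norm_num) (by norm_num)]
          exact prop2 K L hσ hup hdn v hv _

lemma rigid (σ : Cfg K L) (hσ : HardCore K L σ) (hmax : nParticles K L σ = 2*K*L) :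
    ∃ r : ℕ, r < 3 ∧ σ = fun v => decide (v.1.2.val % 3 = r) := by
  have hup : ∀ v, upSum K L σ v = 1 := by
    apply all_one
    · exact upSum_le K L σ hσ
    · rw [sum_upSum, hmax, card_vert]; ring
  have hdn : ∀ v, dnSum K L σ v = 1 := by
    apply all_one
    · exact dnSum_le K L σ hσ
    · rw [sum_dnSum, hmax, card_vert]; ring
  have hK : 0 < K := Nat.pos_of_ne_zero (NeZero.ne K)
  have hL : 0 < L := Nat.pos_of_ne_zero (NeZero.ne L)
  have hpos : 0 < nParticles K L σ := by
    rw [hmax]; exact Nat.mul_pos (Nat.mul_pos (by omega) hK) hL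
  obtain ⟨v0, hv0mem⟩ := Finset.card_pos.mp hpos
  have hv0 : σ v0 = true := (Finset.mem_filter.mp hv0mem).2
  set r := v0.1.2.val % 3 with hrdef
  have hr : r < 3 := Nat.mod_lt _ (by norm_num)
  have claim : ∀ w : Vert K L, w.1.2.val % 3 = r → σ w = true := by
    intro w hw
    set A := (w.1.1 - v0.1.1).val with hA
    set B := (w.1.2 - v0.1.2).val with hB
    have hB3 : 3 ∣ B := by
      have hphi : φ3 L w.1.2 = φ3 L v0.1.2 :=
        val_injective3 (by rw [phi3_val, phi3_val, hw])
      have h0 : φ3 L (w.1.2 - v0.1.2) = 0 := by rw [map_sub, hphi, sub_self]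
      have hcast : ((B:ℕ) : ZMod 3) = φ3 L (w.1.2 - v0.1.2) := by
        rw [φ3, ZMod.castHom_apply, ZMod.natCast_val]
      exact (ZMod.natCast_eq_zero_iff B 3).mp (hcast.trans h0)
    obtain ⟨t, htB⟩ := hB3
    have e1 : ((A:ℕ) : ZMod 2) = ψ K (w.1.1 - v0.1.1) := by
      rw [ψ, ZMod.castHom_apply, ZMod.natCast_val]
    have e2 : ((B:ℕ) : ZMod 2) = χ L (w.1.2 - v0.1.2) := by
      rw [χ, ZMod.castHom_apply, ZMod.natCast_val]
    have hsum0 : ψ K (w.1.1 - v0.1.1) + χ L (w.1.2 - v0.1.2) = 0 := by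
      rw [map_sub, map_sub]
      have h1 := (parity_iff K L _ _).mp w.2
      have h2 := (parity_iff K L _ _).mp v0.2
      linear_combination h1 - h2
    have hAB : ((A + B : ℕ) : ZMod 2) = 0 := by push_cast; rw [e1, e2]; exact hsum0
    have hdvd := (ZMod.natCast_eq_zero_iff _ 2).mp hAB
    have hpar : (A + t) % 2 = 0 := by omega
    have hw_eq : shf K L v0 (A:ℤ) (3*(t:ℤ)) (by omega) = w := by
      apply Subtype.ext
      apply Prod.ext
      · show v0.1.1 + ((A:ℤ) : ZMod (2*K)) = w.1.1
        have : ((A:ℤ) : ZMod (2*K)) = ((A:ℕ) : ZMod (2*K)) := by push_cast; ring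
        rw [this, hA, ZMod.natCast_val, ZMod.cast_id]
        ring
      · show v0.1.2 + ((3*(t:ℤ) : ℤ) : ZMod (6*L)) = w.1.2
        have : ((3*(t:ℤ) : ℤ) : ZMod (6*L)) = ((3*t : ℕ) : ZMod (6*L)) := by push_cast; ring
        rw [this, ← htB, hB, ZMod.natCast_val, ZMod.cast_id]
        ring
    rw [← hw_eq]
    exact reach K L hσ hup hdn (A+t) A t le_rfl hpar v0 hv0 _
  have hsub : classC K L r ⊆ univ.filter (fun v => σ v = true) := by
    intro v hv
    simp only [classC, mem_filter, mem_univ, true_and] at hv ⊢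
    exact claim v hv
  have hcards : (univ.filter (fun v => σ v = true)).card ≤ (classC K L r).card := by
    rw [card_class K L r hr]
    exact le_of_eq hmax
  have heq := Finset.eq_of_subset_of_card_le hsub hcards
  refine ⟨r, hr, ?_⟩
  funext v
  have hv_iff : σ v = true ↔ v.1.2.val % 3 = r := by
    constructor
    · intro h
      have : v ∈ classC K L r := by
        rw [heq]; simp only [mem_filter, mem_univ, true_and]; exact h
      simpa [classC] using this
    · intro h
      exact claim v h
  by_cases hres : v.1.2.val % 3 = r
  · simp [hres, hv_iff.mpr hres]
  · simp only [hres, decide_eq_false_iff_not]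
    cases h : σ v
    · simp
    · exact absurd (hv_iff.mp h) hres

lemma nP_conf (r : ℕ) :
    nParticles K L (fun v => decide (v.1.2.val % 3 = r)) = (classC K L r).card := by
  rw [nParticles, classC]
  congr 1
  apply Finset.filter_congr
  intro v _
  simp

lemma energy_conf (r : ℕ) (hr : r < 3) :
    energy K L (fun v => decide (v.1.2.val % 3 = r)) = -(2 * K * L : ℤ) := by
  rw [energy, nP_conf, card_class K L r hr]
  push_cast
  ring


/-- The set of stable configurations of the hard-core model on the
`2K × 3L` triangular grid is exactly `{a, b, c}`: all three are hard-core configurations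
with energy `-2KL`, and every other hard-core configuration has strictly larger energy. -/
theorem stable_configurations (hK : 2 ≤ K) (hL : 1 ≤ L) :
    HardCore K L (confA K L) ∧ HardCore K L (confB K L) ∧ HardCore K L (confC K L) ∧
    energy K L (confA K L) = -(2 * K * L : ℤ) ∧
    energy K L (confB K L) = -(2 * K * L : ℤ) ∧
    energy K L (confC K L) = -(2 * K * L : ℤ) ∧
    ∀ σ : Cfg K L, HardCore K L σ →
      σ ≠ confA K L → σ ≠ confB K L → σ ≠ confC K L →
      energy K L σ > -(2 * K * L : ℤ) := by
  refine ⟨hc_res K L 0, hc_res K L 1, hc_res K L 2,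
    energy_conf K L 0 (by norm_num), energy_conf K L 1 (by norm_num),
    energy_conf K L 2 (by norm_num), ?_⟩
  intro σ hσ hna hnb hnc
  have hle := nP_le K L σ hσ
  rcases lt_or_eq_of_le hle with hlt | heq
  · rw [energy]
    have hcast : ((2*K*L : ℕ) : ℤ) = 2 * (K:ℤ) * (L:ℤ) := by push_cast; ring
    rw [← hcast]
    exact neg_lt_neg (by exact_mod_cast hlt)
  · obtain ⟨r, hr, hσr⟩ := rigid K L σ hσ heq
    interval_cases r
    · exact absurd hσr hna
    · exact absurd hσr hnb
    · exact absurd hσr hnc
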